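/- arXiv:1510.03166 — 2 statements merged into one kernel-verified Lean document; each statement's English description precedes it below -/
import Mathlib

section
/- If B is a homomorphic image of A via a surjective homomorphism h, then the natural clone homomorphism from Clo(A) to Clo(B) is uniformly continuous with respect to the uniformities of pointwise convergence. -/
/-! Basic universal algebra over a signature. -/

structure Sig where
  ops : Type
  ar : ops → ℕ

structure Alg (σ : Sig) where
  carrier : Type
  interp : ∀ o : σ.ops, (Fin (σ.ar o) → carrier) → carrier

/-- Terms over the variables `x₁, …, xₙ` (represented by `Fin n`). -/
inductive Tm (σ : Sig) (n : ℕ) : Type where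
  | var : Fin n → Tm σ n
  | app : (o : σ.ops) → (Fin (σ.ar o) → Tm σ n) → Tm σ n

/-- Evaluation of a term in an algebra (the map `ν^A_n`). -/
def evalTm {σ : Sig} (A : Alg σ) {n : ℕ} : Tm σ n → (Fin n → A.carrier) → A.carrier
  | .var i, a => a i
  | .app o ts, a => A.interp o fun j => evalTm A (ts j) a

/-- The set `Clo_n(A)` of `n`-ary term operations of `A`. -/
def CloSet {σ : Sig} (A : Alg σ) (n : ℕ) : Set ((Fin n → A.carrier) → A.carrier) :=
  Set.range fun t : Tm σ n => evalTm A t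

def IsSubalg {σ : Sig} (A : Alg σ) (s : Set A.carrier) : Prop :=
  ∀ o : σ.ops, ∀ x : Fin (σ.ar o) → A.carrier, (∀ i, x i ∈ s) → A.interp o x ∈ s

/-- The algebra structure on a subalgebra. -/
def subAlg {σ : Sig} (A : Alg σ) (s : Set A.carrier) (hs : IsSubalg A s) : Alg σ where
  carrier := s
  interp o x := ⟨A.interp o fun i => (x i : A.carrier), hs o _ fun i => (x i).2⟩

def IsHom {σ : Sig} (A B : Alg σ) (h : A.carrier → B.carrier) : Prop :=
  ∀ o x, h (A.interp o x) = B.interp o fun i => h (x i)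

/-- Direct power `A^I`. -/
def powAlg {σ : Sig} (A : Alg σ) (I : Type) : Alg σ where
  carrier := I → A.carrier
  interp o x i := A.interp o fun j => x j i

/-- Product of a family of algebras. -/
def prodAlg {σ : Sig} {I : Type} (f : I → Alg σ) : Alg σ where
  carrier := ∀ i, (f i).carrier
  interp o x i := (f i).interp o fun j => x j i

/-- The subuniverse generated by a subset. -/
def genSet {σ : Sig} (A : Alg σ) (g : Set A.carrier) : Set A.carrier :=
  ⋂₀ {s | IsSubalg A s ∧ g ⊆ s}

lemma genSet_isSubalg {σ : Sig} (A : Alg σ) (g : Set A.carrier) :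
    IsSubalg A (genSet A g) := by
  intro o x hx
  rw [genSet, Set.mem_sInter]
  intro s hs
  exact hs.1 o x fun i => Set.mem_sInter.mp (hx i) s hs

/-- The subalgebra of `A` generated by finitely many elements `g 0, …, g (m-1)`. -/
def fgSub {σ : Sig} (A : Alg σ) (m : ℕ) (g : Fin m → A.carrier) : Alg σ :=
  subAlg A (genSet A (Set.range g)) (genSet_isSubalg A _)

/-- `B` is a homomorphic image of a subalgebra of a (possibly infinite) power of `A`. -/
def MemHSP {σ : Sig} (A B : Alg σ) : Prop :=
  ∃ (I : Type) (s : Set (powAlg A I).carrier) (hs : IsSubalg (powAlg A I) s)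
    (h : (subAlg (powAlg A I) s hs).carrier → B.carrier),
      IsHom (subAlg (powAlg A I) s hs) B h ∧ Function.Surjective h

/-- `B` is a homomorphic image of a subalgebra of a finite power of `A`. -/
def MemHSPfin {σ : Sig} (A B : Alg σ) : Prop :=
  ∃ (I : Type) (_ : Finite I) (s : Set (powAlg A I).carrier) (hs : IsSubalg (powAlg A I) s)
    (h : (subAlg (powAlg A I) s hs).carrier → B.carrier),
      IsHom (subAlg (powAlg A I) s hs) B h ∧ Function.Surjective h

/-- The uniformity of pointwise convergence on `X → Y`, `Y` discrete. -/
def ptUnif (X Y : Type) : UniformSpace (X → Y) :=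
  @Pi.uniformSpace X (fun _ => Y) fun _ => ⊥

/-- The uniformity of pointwise convergence on `Clo_n(A)`. -/
def cloUnif {σ : Sig} (A : Alg σ) (n : ℕ) : UniformSpace ↥(CloSet A n) :=
  (ptUnif (Fin n → A.carrier) A.carrier).comap Subtype.val

/-- `φ` is the natural clone homomorphism from `Clo(A)` to `Clo(B)`:
it sends the evaluation of each term in `A` to its evaluation in `B`
(in each arity `n ≥ 1`). -/
def IsNatHom {σ : Sig} (A B : Alg σ)
    (φ : ∀ n : ℕ, ↥(CloSet A (n + 1)) → ↥(CloSet B (n + 1))) : Prop :=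
  ∀ (n : ℕ) (t : Tm σ (n + 1)), (φ n ⟨evalTm A t, ⟨t, rfl⟩⟩ : _).val = evalTm B t

/-- Uniform continuity of a clone map, with respect to the uniformities of
pointwise convergence (equivalently, uniform continuity on the coproduct). -/
def NatUC {σ : Sig} (A B : Alg σ)
    (φ : ∀ n : ℕ, ↥(CloSet A (n + 1)) → ↥(CloSet B (n + 1))) : Prop :=
  ∀ n : ℕ, @UniformContinuous _ _ (cloUnif A (n + 1)) (cloUnif B (n + 1)) (φ n)

/-- If `B` is a homomorphic image of `A` via a surjective homomorphism, then
the natural clone homomorphism from `Clo(A)` to `Clo(B)` is uniformly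
continuous with respect to the uniformities of pointwise convergence. -/
theorem stmt_7 {σ : Sig} (A B : Alg σ)
    (h : A.carrier → B.carrier) (hhom : IsHom A B h) (hsurj : Function.Surjective h)
    (φ : ∀ n : ℕ, ↥(CloSet A (n + 1)) → ↥(CloSet B (n + 1)))
    (hφ : IsNatHom A B φ) :
    NatUC A B φ := by
  intro n
  have key : ∀ (t : Tm σ (n + 1)) (a : Fin (n + 1) → A.carrier),
      evalTm B t (fun i => h (a i)) = h (evalTm A t a) := by
    intro t
    induction t with
    | var i => intro a; rfl
    | app o ts ih =>
      intro a
      show B.interp o (fun j => evalTm B (ts j) (fun i => h (a i)))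
          = h (A.interp o fun j => evalTm A (ts j) a)
      rw [hhom]
      congr 1
      funext j
      exact ih j a
  have main : ∀ (f : ↥(CloSet A (n + 1))) (a : Fin (n + 1) → A.carrier),
      (φ n f).val (fun i => h (a i)) = h (f.val a) := by
    rintro ⟨f, t, rfl⟩ a
    rw [hφ n t]
    exact key t a
  letI : UniformSpace A.carrier := ⊥
  letI : UniformSpace B.carrier := ⊥
  show UniformContinuous (φ n)
  refine uniformContinuous_comap' ?_
  rw [uniformContinuous_pi]
  intro y
  have hbot : UniformContinuous h := by
    intro s hs
    rw [Filter.mem_map]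
    change _ ∈ Filter.principal SetRel.id
    change s ∈ Filter.principal SetRel.id at hs
    rw [Filter.mem_principal] at hs ⊢
    rintro ⟨x, x'⟩ hx
    exact hs (by simpa [SetRel.id] using congrArg h hx)
  have heq : (fun f : ↥(CloSet A (n + 1)) => (Subtype.val ∘ φ n) f y)
      = fun f => h (f.val fun i => (hsurj (y i)).choose) := by
    funext f
    have := main f fun i => (hsurj (y i)).choose
    rw [show (fun i => h ((hsurj (y i)).choose)) = y
      from funext fun i => (hsurj (y i)).choose_spec] at this
    exact this
  rw [heq]
  exact hbot.comp ((Pi.uniformContinuous_proj _ _).comp uniformContinuous_subtype_val)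
end

section
/- If every finitely generated subalgebra of B is a homomorphic image of a subalgebra of a finite power of A, then B ∈ HSP(A) and the natural clone homomorphism from Clo(A) onto Clo(B) is uniformly continuous. -/
/-! ### Auxiliary development -/

section Aux

variable {σ : Sig}

/-- Terms with variables in an arbitrary type `V`. -/
inductive TmV (σ : Sig) (V : Type) : Type where
  | var : V → TmV σ V
  | app : (o : σ.ops) → (Fin (σ.ar o) → TmV σ V) → TmV σ V

def evalTmV (A : Alg σ) {V : Type} : TmV σ V → (V → A.carrier) → A.carrier
  | .var v, a => a v
  | .app o ts, a => A.interp o fun j => evalTmV A (ts j) a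

def mapVar {V W : Type} (f : V → W) : TmV σ V → TmV σ W
  | .var v => .var (f v)
  | .app o ts => .app o fun j => mapVar f (ts j)

def toTm {n : ℕ} : TmV σ (Fin n) → Tm σ n
  | .var v => .var v
  | .app o ts => .app o fun j => toTm (ts j)

lemma evalTm_toTm (A : Alg σ) {n : ℕ} (t : TmV σ (Fin n)) (g : Fin n → A.carrier) :
    evalTm A (toTm t) g = evalTmV A t g := by
  induction t with
  | var v => rfl
  | app o ts ih =>
      show A.interp o _ = A.interp o _
      congr 1; funext j; exact ih j

lemma evalTmV_mapVar (A : Alg σ) {V W : Type} (f : V → W) (t : TmV σ V)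
    (g : W → A.carrier) : evalTmV A (mapVar f t) g = evalTmV A t (fun v => g (f v)) := by
  induction t with
  | var v => rfl
  | app o ts ih =>
      show A.interp o _ = A.interp o _
      congr 1; funext j; exact ih j

/-- The set of variables occurring in a term. -/
def VarsV {V : Type} : TmV σ V → Set V
  | .var v => {v}
  | .app _ ts => ⋃ j, VarsV (ts j)

lemma VarsV_finite {V : Type} (t : TmV σ V) : (VarsV t).Finite := by
  induction t with
  | var v => exact Set.finite_singleton v
  | app o ts ih => exact Set.finite_iUnion ih

lemma evalTmV_congr (A : Alg σ) {V : Type} (t : TmV σ V) {f g : V → A.carrier}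
    (h : ∀ v ∈ VarsV t, f v = g v) : evalTmV A t f = evalTmV A t g := by
  induction t with
  | var v => exact h v rfl
  | app o ts ih =>
      show A.interp o _ = A.interp o _
      congr 1; funext j
      exact ih j fun v hv => h v (Set.mem_iUnion.2 ⟨j, hv⟩)

lemma evalTm_hom {C D : Alg σ} {h : C.carrier → D.carrier} (hh : IsHom C D h)
    {n : ℕ} (t : Tm σ n) (g : Fin n → C.carrier) :
    h (evalTm C t g) = evalTm D t (fun j => h (g j)) := by
  induction t with
  | var i => rfl
  | app o ts ih =>
      show h (C.interp o _) = D.interp o _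
      rw [hh]; congr 1; funext j; exact ih j

lemma evalTmV_hom {C D : Alg σ} {h : C.carrier → D.carrier} (hh : IsHom C D h)
    {V : Type} (t : TmV σ V) (g : V → C.carrier) :
    h (evalTmV C t g) = evalTmV D t (fun v => h (g v)) := by
  induction t with
  | var v => rfl
  | app o ts ih =>
      show h (C.interp o _) = D.interp o _
      rw [hh]; congr 1; funext j; exact ih j

lemma isHom_val (A : Alg σ) (s : Set A.carrier) (hs : IsSubalg A s) :
    IsHom (subAlg A s hs) A Subtype.val := fun _ _ => rfl

lemma isHom_proj (A : Alg σ) (I : Type) (i : I) :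
    IsHom (powAlg A I) A (fun y => y i) := fun _ _ => rfl

lemma evalTm_pow (A : Alg σ) (I : Type) {n : ℕ} (t : Tm σ n)
    (g : Fin n → (powAlg A I).carrier) (i : I) :
    evalTm (powAlg A I) t g i = evalTm A t (fun j => g j i) :=
  evalTm_hom (isHom_proj A I i) t g

lemma evalTmV_pow (A : Alg σ) (I : Type) {V : Type} (t : TmV σ V)
    (g : V → (powAlg A I).carrier) (i : I) :
    evalTmV (powAlg A I) t g i = evalTmV A t (fun v => g v i) :=
  evalTmV_hom (isHom_proj A I i) t g

lemma mem_genSet_of_mem (A : Alg σ) {g : Set A.carrier} {a : A.carrier} (ha : a ∈ g) :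
    a ∈ genSet A g :=
  Set.mem_sInter.2 fun _ hs => hs.2 ha

lemma genSet_range_eq (A : Alg σ) {ι : Type} (g : ι → A.carrier) :
    genSet A (Set.range g) = {a | ∃ t : TmV σ ι, a = evalTmV A t g} := by
  apply Set.Subset.antisymm
  · apply Set.sInter_subset_of_mem
    constructor
    · intro o x hx
      choose ts hts using hx
      refine ⟨.app o ts, ?_⟩
      show A.interp o x = A.interp o _
      congr 1; funext j; exact hts j
    · rintro a ⟨i, rfl⟩
      exact ⟨.var i, rfl⟩
  · rintro a ⟨t, rfl⟩
    induction t with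
    | var i => exact mem_genSet_of_mem A ⟨i, rfl⟩
    | app o ts ih => exact genSet_isSubalg A _ o _ ih

/-- The key finite lemma: for each tuple `c` in `B` there are finitely many
tuples in `A` such that term operations agreeing on them agree at `c`. -/
lemma keyL (A B : Alg σ)
    (hfin : ∀ (m : ℕ) (g : Fin m → B.carrier), MemHSPfin A (fgSub B m g))
    (m : ℕ) (c : Fin m → B.carrier) :
    ∃ (ι : Type) (_ : Finite ι) (a : ι → (Fin m → A.carrier)),
      (∀ i j j', c j = c j' → a i j = a i j') ∧
      ∀ t t' : Tm σ m, (∀ i, evalTm A t (a i) = evalTm A t' (a i)) →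
        evalTm B t c = evalTm B t' c := by
  obtain ⟨I, hI, s, hs, h, hhom, hsurj⟩ := hfin m c
  have hmem : ∀ j, c j ∈ genSet B (Set.range c) := fun j => mem_genSet_of_mem B ⟨j, rfl⟩
  set cb : Fin m → (fgSub B m c).carrier := fun j => ⟨c j, hmem j⟩ with hcb
  set x : Fin m → (subAlg (powAlg A I) s hs).carrier :=
    fun j => Function.surjInv hsurj (cb j) with hx
  refine ⟨I, hI, fun i j => (x j).val i, ?_, ?_⟩
  · intro i j j' hjj
    have : cb j = cb j' := Subtype.ext hjj
    simp only [hx, this]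
  · intro t t' hag
    have hxeq : evalTm (subAlg (powAlg A I) s hs) t x
        = evalTm (subAlg (powAlg A I) s hs) t' x := by
      apply Subtype.ext
      apply funext
      intro i
      have h1 := evalTm_hom (isHom_val (powAlg A I) s hs) t x
      have h2 := evalTm_hom (isHom_val (powAlg A I) s hs) t' x
      calc (evalTm (subAlg (powAlg A I) s hs) t x).val i
          = evalTm (powAlg A I) t (fun j => (x j).val) i := by rw [h1]
        _ = evalTm A t (fun j => (x j).val i) := evalTm_pow A I t _ i
        _ = evalTm A t' (fun j => (x j).val i) := hag i
        _ = evalTm (powAlg A I) t' (fun j => (x j).val) i := (evalTm_pow A I t' _ i).symm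
        _ = (evalTm (subAlg (powAlg A I) s hs) t' x).val i := by rw [h2]
    have hhx : ∀ j, h (x j) = cb j := fun j => Function.surjInv_eq hsurj (cb j)
    have := congrArg h hxeq
    rw [evalTm_hom hhom, evalTm_hom hhom] at this
    simp only [hhx] at this
    have gs := genSet_isSubalg B (Set.range c)
    have e1 : (evalTm (fgSub B m c) t cb).val = evalTm B t c :=
      evalTm_hom (isHom_val B (genSet B (Set.range c)) gs) t cb
    have e2 : (evalTm (fgSub B m c) t' cb).val = evalTm B t' c :=
      evalTm_hom (isHom_val B (genSet B (Set.range c)) gs) t' cb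
    rw [← e1, ← e2]
    exact congrArg Subtype.val this

/-- Identities of `A` hold in `B`. -/
lemma identL (A B : Alg σ)
    (hfin : ∀ (m : ℕ) (g : Fin m → B.carrier), MemHSPfin A (fgSub B m g))
    {n : ℕ} (t t' : Tm σ n) (h : evalTm A t = evalTm A t') :
    evalTm B t = evalTm B t' := by
  funext c
  obtain ⟨ι, hι, a, _, key⟩ := keyL A B hfin n c
  exact key t t' fun i => congrFun h (a i)

/-- Infinitary version of the key lemma, when `A` is nonempty. -/
lemma LinfL (A B : Alg σ) (hA : Nonempty A.carrier)
    (hfin : ∀ (m : ℕ) (g : Fin m → B.carrier), MemHSPfin A (fgSub B m g))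
    (t t' : TmV σ B.carrier)
    (hyp : ∀ f : B.carrier → A.carrier, evalTmV A t f = evalTmV A t' f) :
    evalTmV B t id = evalTmV B t' id := by
  classical
  have hVfin : (VarsV t ∪ VarsV t').Finite := (VarsV_finite t).union (VarsV_finite t')
  obtain ⟨m, e, he⟩ := hVfin.fin_embedding
  set b₀ : B.carrier := evalTmV B t id with hb₀
  set c : Fin (m + 1) → B.carrier := Fin.cons b₀ e with hc
  have hrange : ∀ v ∈ VarsV t ∪ VarsV t', ∃ i, c i = v := by
    intro v hv
    rw [← he] at hv
    obtain ⟨i, hi⟩ := hv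
    exact ⟨Fin.succ i, by simp [hc, hi]⟩
  set idx : B.carrier → Fin (m + 1) :=
    fun v => if h : ∃ i, c i = v then h.choose else 0 with hidxdef
  have hidx : ∀ v ∈ VarsV t ∪ VarsV t', c (idx v) = v := by
    intro v hv
    have hex := hrange v hv
    simp only [hidxdef, dif_pos hex]
    exact hex.choose_spec
  obtain ⟨ι, hι, a, hcompat, key⟩ := keyL A B hfin (m + 1) c
  have hkey : evalTm B (toTm (mapVar idx t)) c = evalTm B (toTm (mapVar idx t')) c := by
    apply key
    intro i
    set f : B.carrier → A.carrier :=
      fun v => if h : ∃ j, c j = v then a i h.choose else hA.some with hfdef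
    have hfc : ∀ j, f (c j) = a i j := by
      intro j
      have hex : ∃ j', c j' = c j := ⟨j, rfl⟩
      simp only [hfdef, dif_pos hex]
      exact hcompat i _ j hex.choose_spec
    have heA : ∀ u : TmV σ B.carrier, (∀ v ∈ VarsV u, ∃ k, c k = v) →
        evalTm A (toTm (mapVar idx u)) (a i) = evalTmV A u f := by
      intro u hu
      rw [evalTm_toTm, evalTmV_mapVar]
      apply evalTmV_congr
      intro v hv
      have h1 : c (idx v) = v := by
        have hex := hu v hv
        simp only [hidxdef, dif_pos hex]
        exact hex.choose_spec
      calc a i (idx v) = f (c (idx v)) := (hfc (idx v)).symm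
        _ = f v := by rw [h1]
    rw [heA t fun v hv => hrange v (Or.inl hv),
        heA t' fun v hv => hrange v (Or.inr hv)]
    exact hyp f
  rw [evalTm_toTm, evalTm_toTm, evalTmV_mapVar, evalTmV_mapVar] at hkey
  calc evalTmV B t id = evalTmV B t (fun v => c (idx v)) :=
        (evalTmV_congr B t fun v hv => (hidx v (Or.inl hv))).symm
    _ = evalTmV B t' (fun v => c (idx v)) := hkey
    _ = evalTmV B t' id := evalTmV_congr B t' fun v hv => hidx v (Or.inr hv)

/-- The main construction of `B` as a quotient of a subalgebra of a power of `A`,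
when `A` is nonempty. -/
lemma memHSPpos (A B : Alg σ) (hA : Nonempty A.carrier)
    (hfin : ∀ (m : ℕ) (g : Fin m → B.carrier), MemHSPfin A (fgSub B m g)) :
    MemHSP A B := by
  classical
  set I := B.carrier → A.carrier with hI
  set x : B.carrier → (powAlg A I).carrier := fun b f => f b with hxdef
  have hS := genSet_isSubalg (powAlg A I) (Set.range x)
  have repr : ∀ y : ↥(genSet (powAlg A I) (Set.range x)), ∃ t : TmV σ B.carrier,
      y.val = evalTmV (powAlg A I) t x := by
    intro y
    exact (genSet_range_eq (powAlg A I) x).subset y.2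
  choose rep hrep using repr
  have bridge : ∀ t t' : TmV σ B.carrier,
      evalTmV (powAlg A I) t x = evalTmV (powAlg A I) t' x →
      evalTmV B t id = evalTmV B t' id := by
    intro t t' he
    apply LinfL A B hA hfin
    intro f
    have := congrFun he f
    rw [evalTmV_pow, evalTmV_pow] at this
    exact this
  refine ⟨I, genSet (powAlg A I) (Set.range x), hS,
    fun y => evalTmV B (rep y) id, ?_, ?_⟩
  · intro o y
    have hrv : ((subAlg (powAlg A I) _ hS).interp o y).val
        = evalTmV (powAlg A I) (.app o fun j => rep (y j)) x := by
      show (powAlg A I).interp o (fun j => (y j).val)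
        = (powAlg A I).interp o fun j => evalTmV (powAlg A I) (rep (y j)) x
      congr 1
      funext j
      exact hrep (y j)
    exact bridge (rep ((subAlg (powAlg A I) _ hS).interp o y))
      (.app o fun j => rep (y j)) (((hrep _).symm.trans hrv))
  · intro b
    refine ⟨⟨x b, mem_genSet_of_mem _ ⟨b, rfl⟩⟩, ?_⟩
    exact bridge (rep ⟨x b, mem_genSet_of_mem _ ⟨b, rfl⟩⟩) (.var b)
      ((hrep ⟨x b, mem_genSet_of_mem _ ⟨b, rfl⟩⟩).symm)

end Aux

/-- If every finitely generated subalgebra of `B` is a homomorphic image of a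
subalgebra of a finite power of `A`, then `B ∈ HSP(A)` and the natural clone
homomorphism from `Clo(A)` onto `Clo(B)` is uniformly continuous. -/
theorem stmt_8 {σ : Sig} (A B : Alg σ)
    (hfin : ∀ (m : ℕ) (g : Fin m → B.carrier), MemHSPfin A (fgSub B m g)) :
    MemHSP A B ∧ ∃ φ : ∀ n : ℕ, ↥(CloSet A (n + 1)) → ↥(CloSet B (n + 1)),
      IsNatHom A B φ ∧ NatUC A B φ := by
  have hkey := keyL A B hfin
  constructor
  · -- B ∈ HSP(A)
    by_cases hA : Nonempty A.carrier
    · exact memHSPpos A B hA hfin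
    · -- A is empty: B is a subsingleton
      have hBsub : ∀ b b' : B.carrier, b = b' := by
        intro b b'
        obtain ⟨I, hI, s, hs, h, hhom, hsurj⟩ := hfin 2 ![b, b']
        have hb : b ∈ genSet B (Set.range ![b, b']) :=
          mem_genSet_of_mem B ⟨0, rfl⟩
        have hb' : b' ∈ genSet B (Set.range ![b, b']) :=
          mem_genSet_of_mem B ⟨1, rfl⟩
        have hIempty : IsEmpty I := by
          by_contra hne
          rw [not_isEmpty_iff] at hne
          obtain ⟨i⟩ := hne
          obtain ⟨u, _⟩ := hsurj ⟨b, hb⟩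
          exact hA ⟨u.val i⟩
        have hsub : ∀ u u' : (powAlg A I).carrier, u = u' :=
          fun u u' => funext fun i => (hIempty.false i).elim
        obtain ⟨u, hu⟩ := hsurj ⟨b, hb⟩
        obtain ⟨u', hu'⟩ := hsurj ⟨b', hb'⟩
        have huu : u = u' := Subtype.ext (hsub _ _)
        have : h u = h u' := congrArg h huu
        rw [hu, hu'] at this
        exact congrArg Subtype.val this
      by_cases hB : Nonempty B.carrier
      · obtain ⟨b₀⟩ := hB
        refine ⟨Empty, Set.univ, fun o z hz => trivial, fun _ => b₀,
          fun o z => hBsub _ _, fun b => ⟨⟨fun e => e.elim, trivial⟩, hBsub _ _⟩⟩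
      · have hs : IsSubalg (powAlg A Empty) (∅ : Set (powAlg A Empty).carrier) := by
          intro o z hz
          rcases Nat.eq_zero_or_pos (σ.ar o) with h0 | h0
          · exact absurd ⟨B.interp o fun i => absurd i.isLt (by omega)⟩ hB
          · exact absurd (hz ⟨0, h0⟩) (Set.notMem_empty _)
        refine ⟨Empty, ∅, hs, fun u => absurd u.2 (Set.notMem_empty _), ?_, ?_⟩
        · intro o z
          rcases Nat.eq_zero_or_pos (σ.ar o) with h0 | h0
          · exact absurd ⟨B.interp o fun i => absurd i.isLt (by omega)⟩ hB
          · exact absurd (z ⟨0, h0⟩).2 (Set.notMem_empty _)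
        · intro b
          exact absurd ⟨b⟩ hB
  · -- the natural clone homomorphism
    have hch : ∀ (n : ℕ) (F : ↥(CloSet A n)), ∃ t : Tm σ n, evalTm A t = F.val :=
      fun n F => F.2
    refine ⟨fun n F => ⟨evalTm B (hch (n + 1) F).choose, ⟨_, rfl⟩⟩, ?_, ?_⟩
    · intro n t
      show evalTm B (hch (n + 1) ⟨evalTm A t, ⟨t, rfl⟩⟩).choose = evalTm B t
      exact identL A B hfin _ t (hch (n + 1) ⟨evalTm A t, ⟨t, rfl⟩⟩).choose_spec
    · intro n
      letI : UniformSpace A.carrier := ⊥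
      letI : UniformSpace B.carrier := ⊥
      letI uA : UniformSpace ↥(CloSet A (n + 1)) := cloUnif A (n + 1)
      letI uB : UniformSpace ↥(CloSet B (n + 1)) := cloUnif B (n + 1)
      show UniformContinuous fun F : ↥(CloSet A (n + 1)) =>
        (⟨evalTm B (hch (n + 1) F).choose, ⟨_, rfl⟩⟩ : ↥(CloSet B (n + 1)))
      have huB : uB = instUniformSpaceSubtype := rfl
      rw [huB]
      apply UniformContinuous.subtype_mk (f := fun F => evalTm B (hch (n + 1) F).choose)
        (p := fun u => u ∈ CloSet B (n + 1)) ?_ (fun F => ⟨_, rfl⟩)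
      rw [uniformContinuous_pi]
      intro b
      show Filter.Tendsto _ (uniformity _) (uniformity B.carrier)
      rw [bot_uniformity, Filter.tendsto_principal]
      obtain ⟨ι, hι, a, hcompat, key⟩ := hkey (n + 1) b
      have hU : (⋂ i : ι, {p : ↥(CloSet A (n + 1)) × ↥(CloSet A (n + 1)) |
          p.1.val (a i) = p.2.val (a i)}) ∈ uniformity ↥(CloSet A (n + 1)) := by
        rw [Filter.iInter_mem]
        intro i
        have h1 : {q : ((Fin (n+1) → A.carrier) → A.carrier) ×
            ((Fin (n+1) → A.carrier) → A.carrier) | q.1 (a i) = q.2 (a i)}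
            ∈ uniformity ((Fin (n+1) → A.carrier) → A.carrier) := by
          rw [Pi.uniformity]
          apply Filter.mem_iInf_of_mem (a i)
          rw [bot_uniformity]
          exact Filter.preimage_mem_comap (Filter.mem_principal_self _)
        have h2 : uniformity ↥(CloSet A (n + 1)) = Filter.comap
            (fun q : ↥(CloSet A (n + 1)) × ↥(CloSet A (n + 1)) => (q.1.val, q.2.val))
            (uniformity ((Fin (n+1) → A.carrier) → A.carrier)) := by
          have : uA = instUniformSpaceSubtype := rfl
          rw [this, uniformity_subtype]
        rw [h2]
        exact Filter.preimage_mem_comap h1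
      apply Filter.mem_of_superset hU
      intro p hp
      rw [Set.mem_iInter] at hp
      show (evalTm B (hch (n + 1) p.1).choose b, evalTm B (hch (n + 1) p.2).choose b) ∈ SetRel.id
      show evalTm B (hch (n + 1) p.1).choose b = evalTm B (hch (n + 1) p.2).choose b
      apply key
      intro i
      calc evalTm A (hch (n + 1) p.1).choose (a i) = p.1.val (a i) :=
            congrFun (hch (n + 1) p.1).choose_spec (a i)
        _ = p.2.val (a i) := hp i
        _ = evalTm A (hch (n + 1) p.2).choose (a i) :=
            (congrFun (hch (n + 1) p.2).choose_spec (a i)).symm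
end
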